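/- Let Γ be an infinite set, let 1 < p < ∞, and let E = ℓ_p(Γ). Then every family 𝒰 of neighborhoods of 0 in the weak topology σ(E,E′) with ⋂𝒰 = {0} has cardinality at least |Γ|; that is, the pseudocharacter of (E, σ(E,E′)) is at least |Γ|. In particular, for uncountable Γ the space (ℓ_p(Γ), σ(E,E′)) does not have countable pseudocharacter. -/

import Mathlib

open TopologicalSpace Filter Set

/-- A family `N` of subsets of a topological space `X` is a *k-network* if whenever `K ⊆ U`
with `K` compact and `U` open, there is a finite subfamily `F ⊆ N` with `K ⊆ ⋃₀ F ⊆ U`. -/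
def IsKNetwork {X : Type*} [TopologicalSpace X] (N : Set (Set X)) : Prop :=
  ∀ K U : Set X, IsCompact K → IsOpen U → K ⊆ U →
    ∃ F : Set (Set X), F ⊆ N ∧ F.Finite ∧ K ⊆ ⋃₀ F ∧ ⋃₀ F ⊆ U

/-- A family `N` of subsets of `X` is a *network* if for every `x` and every open `U ∋ x`
there is `A ∈ N` with `x ∈ A ⊆ U`. -/
def IsNetwork {X : Type*} [TopologicalSpace X] (N : Set (Set X)) : Prop :=
  ∀ (x : X) (U : Set X), IsOpen U → x ∈ U → ∃ A ∈ N, x ∈ A ∧ A ⊆ U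

/-- A family of subsets is *locally finite* if every point has a neighbourhood meeting
only finitely many of its members. -/
def IsLocallyFiniteFamily {X : Type*} [TopologicalSpace X] (N : Set (Set X)) : Prop :=
  ∀ x : X, ∃ V ∈ nhds x, {A ∈ N | (A ∩ V).Nonempty}.Finite

/-- A family of subsets is *σ-locally finite* if it is a countable union of locally finite
families. -/
def IsSigmaLocallyFinite {X : Type*} [TopologicalSpace X] (N : Set (Set X)) : Prop :=
  ∃ f : ℕ → Set (Set X), (∀ n, IsLocallyFiniteFamily (f n)) ∧ N = ⋃ n, f n

/-- An *ℵ-space* is a regular Hausdorff space with a σ-locally finite k-network. -/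
def IsAlephSpace (X : Type*) [TopologicalSpace X] : Prop :=
  RegularSpace X ∧ T2Space X ∧ ∃ N : Set (Set X), IsSigmaLocallyFinite N ∧ IsKNetwork N

/-- An *ℵ₀-space* is a regular Hausdorff space with a countable k-network. -/
def IsAleph0Space (X : Type*) [TopologicalSpace X] : Prop :=
  RegularSpace X ∧ T2Space X ∧ ∃ N : Set (Set X), N.Countable ∧ IsKNetwork N

section helpers

variable {Γ : Type} [Infinite Γ] {p : ENNReal}


lemma aux_countable_support [DecidableEq Γ] [Fact (1 ≤ p)] (hp1 : 1 < p) (hpt : p < ⊤)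
    (f : lp (fun _ : Γ => ℝ) p →L[ℝ] ℝ) :
    {γ : Γ | f (lp.single p γ 1) ≠ 0}.Countable := by
  classical
  set r : ℝ := p.toReal with hr
  have hp0 : p ≠ ⊤ := hpt.ne
  have hr1 : 1 < r := by
    rw [hr, ← ENNReal.toReal_one]
    exact (ENNReal.toReal_lt_toReal (by simp) hp0).mpr hp1
  have hr0 : 0 < r := lt_trans one_pos hr1
  set g : Γ → ℝ := fun γ => f (lp.single p γ 1) with hg
  -- finiteness of level sets
  have key : ∀ δ : ℝ, 0 < δ → {γ : Γ | δ ≤ |g γ|}.Finite := by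
    intro δ hδ
    by_contra hfin
    have hinf : {γ : Γ | δ ≤ |g γ|}.Infinite := hfin
    set c : Γ → ℝ := fun γ => if 0 ≤ g γ then (1:ℝ) else -1 with hc
    have hcg : ∀ γ, c γ * g γ = |g γ| := by
      intro γ
      by_cases h : 0 ≤ g γ
      · simp [hc, h, abs_of_nonneg h]
      · simp [hc, h, abs_of_neg (lt_of_not_ge h)]
    have hcnorm : ∀ γ, ‖c γ‖ = 1 := by
      intro γ
      by_cases h : 0 ≤ g γ <;> simp [hc, h]
    -- master inequality
    have master : ∀ T : Finset Γ, (↑T : Set Γ) ⊆ {γ : Γ | δ ≤ |g γ|} →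
        (T.card : ℝ) * δ ≤ ‖f‖ * (T.card : ℝ) ^ (r⁻¹) := by
      intro T hT
      set x : lp (fun _ : Γ => ℝ) p := ∑ γ ∈ T, lp.single p γ (c γ) with hx
      have hnorm : ‖x‖ ^ r = (T.card : ℝ) := by
        rw [hx, lp.norm_sum_single hr0]
        simp [hcnorm, Real.one_rpow]
      have hxnorm : ‖x‖ = (T.card : ℝ) ^ (r⁻¹) := by
        rw [← hnorm, Real.rpow_rpow_inv (norm_nonneg _) hr0.ne']
      have hfx : (T.card : ℝ) * δ ≤ f x := by
        rw [hx, map_sum]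
        have : ∀ γ ∈ T, δ ≤ f (lp.single p γ (c γ)) := by
          intro γ hγ
          have hs : lp.single p γ (c γ) = c γ • (lp.single p γ 1 : lp (fun _ : Γ => ℝ) p) := by
            rw [← lp.single_smul]
            norm_num
          rw [hs, map_smul, smul_eq_mul, hcg γ]
          exact hT hγ
        calc (T.card : ℝ) * δ = ∑ _γ ∈ T, δ := by rw [Finset.sum_const, nsmul_eq_mul]
          _ ≤ ∑ γ ∈ T, f (lp.single p γ (c γ)) := Finset.sum_le_sum this
      calc (T.card : ℝ) * δ ≤ f x := hfx
        _ ≤ ‖f x‖ := le_abs_self _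
        _ ≤ ‖f‖ * ‖x‖ := f.le_opNorm x
        _ = ‖f‖ * (T.card : ℝ) ^ (r⁻¹) := by rw [hxnorm]
    -- derive bound δ * n ^ (1 - r⁻¹) ≤ ‖f‖ for all n ≥ 1
    have bound : ∀ n : ℕ, 1 ≤ n → δ * (n : ℝ) ^ (1 - r⁻¹) ≤ ‖f‖ := by
      intro n hn
      obtain ⟨T, hTs, hTc⟩ := hinf.exists_subset_card_eq n
      have h := master T hTs
      rw [hTc] at h
      have hnpos : (0:ℝ) < n := by exact_mod_cast hn
      have hpow : (0:ℝ) < (n:ℝ) ^ (r⁻¹) := Real.rpow_pos_of_pos hnpos _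
      have h2 : (δ * (n:ℝ) ^ (1 - r⁻¹)) * (n:ℝ) ^ (r⁻¹) ≤ ‖f‖ * (n:ℝ) ^ (r⁻¹) := by
        calc (δ * (n:ℝ) ^ (1 - r⁻¹)) * (n:ℝ) ^ (r⁻¹)
            = (n:ℝ) ^ (1 - r⁻¹ + r⁻¹) * δ := by rw [Real.rpow_add hnpos]; ring
          _ = (n:ℝ) * δ := by rw [sub_add_cancel, Real.rpow_one]
          _ ≤ ‖f‖ * (n:ℝ) ^ (r⁻¹) := h
      exact le_of_mul_le_mul_right h2 hpow
    -- contradiction using tendsto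
    have hs : (0:ℝ) < 1 - r⁻¹ := by
      have : r⁻¹ < 1 := inv_lt_one_of_one_lt₀ hr1
      linarith
    have htend : Tendsto (fun n : ℕ => δ * (n:ℝ) ^ (1 - r⁻¹)) atTop atTop :=
      ((tendsto_rpow_atTop hs).comp tendsto_natCast_atTop_atTop).const_mul_atTop hδ
    obtain ⟨n, hn1, hn2⟩ := ((htend.eventually_gt_atTop ‖f‖).and (eventually_ge_atTop 1)).exists
    exact absurd (bound n hn2) (not_le.mpr hn1)
  -- countability
  have : {γ : Γ | g γ ≠ 0} ⊆ ⋃ n : ℕ, {γ : Γ | 1/((n:ℝ)+1) ≤ |g γ|} := by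
    intro γ hγ
    have habs : 0 < |g γ| := abs_pos.mpr hγ
    obtain ⟨n, hn⟩ := exists_nat_one_div_lt habs
    exact Set.mem_iUnion.mpr ⟨n, le_of_lt hn⟩
  have hc2 : ∀ n : ℕ, {γ : Γ | 1/((n:ℝ)+1) ≤ |g γ|}.Countable := fun n =>
    (key (1/((n:ℝ)+1)) (by positivity)).countable
  exact (Set.countable_iUnion hc2).mono this


lemma aux_kernel [DecidableEq Γ] [Fact (1 ≤ p)]
    (Fs : Finset (lp (fun _ : Γ => ℝ) p →L[ℝ] ℝ)) :
    ∃ x : lp (fun _ : Γ => ℝ) p, x ≠ 0 ∧ ∀ f ∈ Fs, f x = 0 := by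
  classical
  set E := lp (fun _ : Γ => ℝ) p
  set k := Fs.card with hk
  obtain ⟨emb⟩ : Nonempty (Fin (k+1) ↪ Γ) := ⟨(Fin.valEmbedding).trans (Infinite.natEmbedding Γ)⟩
  set M : (Fin (k+1) → ℝ) →ₗ[ℝ] E :=
    { toFun := fun c => ∑ i, c i • (lp.single p (emb i) 1 : E)
      map_add' := by
        intro a b
        simp [add_smul, Finset.sum_add_distrib]
      map_smul' := by
        intro m a
        simp [smul_smul, Finset.smul_sum] } with hM
  set L : (Fin (k+1) → ℝ) →ₗ[ℝ] (↥Fs → ℝ) :=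
    LinearMap.pi (fun f => ((f : E →L[ℝ] ℝ) : E →ₗ[ℝ] ℝ).comp M) with hL
  have hker : ∃ c : Fin (k+1) → ℝ, c ≠ 0 ∧ L c = 0 := by
    by_contra hcon
    push_neg at hcon
    have hinj : Function.Injective L := by
      rw [← LinearMap.ker_eq_bot, LinearMap.ker_eq_bot']
      intro c hc
      by_contra hc0
      exact (hcon c hc0) hc
    have hle := LinearMap.finrank_le_finrank_of_injective hinj
    rw [Module.finrank_fintype_fun_eq_card, Module.finrank_fintype_fun_eq_card] at hle
    simp only [Fintype.card_fin, Fintype.card_coe] at hle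
    omega
  obtain ⟨c, hc0, hLc⟩ := hker
  refine ⟨M c, ?_, ?_⟩
  · obtain ⟨i, hi⟩ := Function.ne_iff.mp hc0
    intro hMc
    apply hi
    have hcoe := lp.coeFn_sum (fun j : Fin (k+1) => c j • (lp.single p (emb j) 1 : E)) Finset.univ
    have : (M c : ∀ _ : Γ, ℝ) (emb i) = c i := by
      simp only [hM, LinearMap.coe_mk, AddHom.coe_mk]
      rw [hcoe, Finset.sum_apply]
      rw [Finset.sum_eq_single i]
      · simp [lp.coeFn_smul, lp.single_apply_self]
      · intro j _ hj
        have : (emb i) ≠ (emb j) := fun h => hj (emb.injective h).symm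
        simp [lp.coeFn_smul, lp.single_apply_ne p _ _ this, Pi.single_apply, this]
      · simp
    rw [hMc] at this
    rw [lp.coeFn_zero] at this
    simpa using this.symm
  · intro f hf
    have := congrFun hLc ⟨f, hf⟩
    simpa [hL, LinearMap.pi_apply] using this

variable {E' : Type*} [NormedAddCommGroup E'] [NormedSpace ℝ E']


lemma aux_nbhd (U : Set (WeakSpace ℝ E')) (hU : U ∈ nhds (0 : WeakSpace ℝ E')) :
    ∃ I : Set (E' →L[ℝ] ℝ), I.Finite ∧
      ∀ x : WeakSpace ℝ E', (∀ f ∈ I, f x = 0) → x ∈ U := by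
  set B := (topDualPairing ℝ E').flip with hB
  have hnhds : nhds (0 : WeakSpace ℝ E') =
      Filter.comap (fun (x : WeakSpace ℝ E') (y : E' →L[ℝ] ℝ) => B x y)
        (nhds (fun y : E' →L[ℝ] ℝ => B 0 y)) :=
    nhds_induced _ _
  rw [hnhds, Filter.mem_comap] at hU
  obtain ⟨V, hV, hVU⟩ := hU
  rw [nhds_pi, Filter.mem_pi] at hV
  obtain ⟨I, hIfin, W, hW, hIW⟩ := hV
  refine ⟨I, hIfin, fun x hx => ?_⟩
  apply hVU
  apply hIW
  intro f hf
  have h0 : B 0 f = 0 := by simp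
  have : B x f = 0 := by
    exact hx f hf
  show B x f ∈ W f
  rw [this, ← h0]
  exact mem_of_mem_nhds (hW f)


lemma aux_annihilate [DecidableEq Γ] [Fact (1 ≤ p)] (hp1 : 1 < p) (hpt : p < ⊤)
    (aux_countable_support : ∀ f : lp (fun _ : Γ => ℝ) p →L[ℝ] ℝ,
      {γ : Γ | f (lp.single p γ 1) ≠ 0}.Countable)
    (aux_kernel : ∀ Fs : Finset (lp (fun _ : Γ => ℝ) p →L[ℝ] ℝ),
      ∃ x : lp (fun _ : Γ => ℝ) p, x ≠ 0 ∧ ∀ f ∈ Fs, f x = 0)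
    (F : Set (lp (fun _ : Γ => ℝ) p →L[ℝ] ℝ)) (hF : Cardinal.mk F < Cardinal.mk Γ) :
    ∃ x : lp (fun _ : Γ => ℝ) p, x ≠ 0 ∧ ∀ f ∈ F, f x = 0 := by
  classical
  rcases Set.finite_or_infinite F with hfin | hinf
  · obtain ⟨x, hx0, hx⟩ := aux_kernel hfin.toFinset
    exact ⟨x, hx0, fun f hf => hx f (hfin.mem_toFinset.mpr hf)⟩
  · set S : Set Γ := ⋃ f : ↥F, {γ : Γ | (f : lp (fun _ : Γ => ℝ) p →L[ℝ] ℝ) (lp.single p γ 1) ≠ 0}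
      with hS
    haveI := hinf.to_subtype
    have hSc : Cardinal.mk S < Cardinal.mk Γ := by
      have h1 := Cardinal.mk_iUnion_le
        (fun f : ↥F => {γ : Γ | (f : lp (fun _ : Γ => ℝ) p →L[ℝ] ℝ) (lp.single p γ 1) ≠ 0})
      have h2 : (⨆ f : ↥F, Cardinal.mk
          {γ : Γ | (f : lp (fun _ : Γ => ℝ) p →L[ℝ] ℝ) (lp.single p γ 1) ≠ 0}) ≤ Cardinal.aleph0 :=
        ciSup_le' fun f => Cardinal.le_aleph0_iff_set_countable.mpr (aux_countable_support f)
      have h3 : Cardinal.mk S ≤ Cardinal.mk F * Cardinal.aleph0 :=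
        h1.trans (mul_le_mul_right h2 _)
      rw [Cardinal.mul_aleph0_eq (Cardinal.aleph0_le_mk_iff.mpr hinf.to_subtype)] at h3
      exact h3.trans_lt hF
    have hγ : ∃ γ : Γ, γ ∉ S := by
      by_contra h
      push_neg at h
      have : S = Set.univ := Set.eq_univ_of_forall h
      rw [this, Cardinal.mk_univ] at hSc
      exact lt_irrefl _ hSc
    obtain ⟨γ, hγ⟩ := hγ
    refine ⟨lp.single p γ 1, ?_, ?_⟩
    · intro h0
      have h1 : (lp.single p γ (1:ℝ) : ∀ _ : Γ, ℝ) γ = 1 := lp.single_apply_self p γ 1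
      rw [h0, lp.coeFn_zero] at h1
      exact one_ne_zero (α := ℝ) (by simpa using h1)
    · intro f hf
      by_contra hne
      exact hγ (Set.mem_iUnion.mpr ⟨⟨f, hf⟩, hne⟩)

end helpers

/-- For an infinite set `Γ` and `1 < p < ∞`, every family of weak neighbourhoods of `0`
in `ℓ_p(Γ)` whose intersection is `{0}` has cardinality at least `|Γ|`. In particular,
for uncountable `Γ` the space `(ℓ_p(Γ), σ(E,E'))` does not have countable pseudocharacter. -/
theorem lp_weak_pseudocharacter_ge (Γ : Type) [Infinite Γ] (p : ENNReal)
    (hp1 : 1 < p) (hpt : p < ⊤) :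
    haveI : Fact (1 ≤ p) := ⟨hp1.le⟩
    (∀ 𝒰 : Set (Set (WeakSpace ℝ (lp (fun _ : Γ => ℝ) p))),
        (∀ U ∈ 𝒰, U ∈ nhds (0 : WeakSpace ℝ (lp (fun _ : Γ => ℝ) p))) →
        ⋂₀ 𝒰 = {0} → Cardinal.mk Γ ≤ Cardinal.mk 𝒰) ∧
    (¬ Countable Γ →
      ¬ ∃ 𝒰 : Set (Set (WeakSpace ℝ (lp (fun _ : Γ => ℝ) p))),
          𝒰.Countable ∧ (∀ U ∈ 𝒰, IsOpen U) ∧ ⋂₀ 𝒰 = {0}) := by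
  classical
  haveI : Fact (1 ≤ p) := ⟨hp1.le⟩
  have part1 : ∀ 𝒰 : Set (Set (WeakSpace ℝ (lp (fun _ : Γ => ℝ) p))),
      (∀ U ∈ 𝒰, U ∈ nhds (0 : WeakSpace ℝ (lp (fun _ : Γ => ℝ) p))) →
      ⋂₀ 𝒰 = {0} → Cardinal.mk Γ ≤ Cardinal.mk 𝒰 := by
    intro 𝒰 h𝒰 hInt
    by_contra hcard
    rw [not_le] at hcard
    have hch : ∀ U : ↥𝒰, ∃ I : Set ((lp (fun _ : Γ => ℝ) p) →L[ℝ] ℝ), I.Finite ∧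
        ∀ x : WeakSpace ℝ (lp (fun _ : Γ => ℝ) p), (∀ f ∈ I, f x = 0) → x ∈ (U : Set _) :=
      fun U => aux_nbhd (E' := lp (fun _ : Γ => ℝ) p) U (h𝒰 U U.2)
    choose I hIfin hImem using hch
    set F : Set ((lp (fun _ : Γ => ℝ) p) →L[ℝ] ℝ) := ⋃ U : ↥𝒰, I U with hF
    have hFΓ : Cardinal.mk F < Cardinal.mk Γ := by
      rcases Set.finite_or_infinite F with hf | hinf
      · exact lt_of_lt_of_le (Cardinal.mk_lt_aleph0_iff.mpr hf.to_subtype)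
          (Cardinal.aleph0_le_mk_iff.mpr inferInstance)
      · have h𝒰inf : 𝒰.Infinite := by
          by_contra hUf
          rw [Set.not_infinite] at hUf
          haveI := hUf.to_subtype
          exact hinf (Set.finite_iUnion fun U => hIfin U)
        haveI := h𝒰inf.to_subtype
        have h1 := Cardinal.mk_iUnion_le I
        have h2 : (⨆ U : ↥𝒰, Cardinal.mk (I U)) ≤ Cardinal.aleph0 :=
          ciSup_le' fun U => Cardinal.le_aleph0_iff_set_countable.mpr (hIfin U).countable
        have h3 : Cardinal.mk F ≤ Cardinal.mk 𝒰 * Cardinal.aleph0 :=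
          h1.trans (mul_le_mul_right h2 _)
        rw [Cardinal.mul_aleph0_eq (Cardinal.aleph0_le_mk_iff.mpr inferInstance)] at h3
        exact h3.trans_lt hcard
    obtain ⟨x, hx0, hxF⟩ := aux_annihilate hp1 hpt
      (fun f => aux_countable_support hp1 hpt f) (fun Fs => aux_kernel Fs) F hFΓ
    have hxmem : (x : WeakSpace ℝ (lp (fun _ : Γ => ℝ) p)) ∈ ⋂₀ 𝒰 := by
      intro U hU
      exact hImem ⟨U, hU⟩ x (fun f hf => hxF f (Set.mem_iUnion.mpr ⟨⟨U, hU⟩, hf⟩))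
    rw [hInt] at hxmem
    exact hx0 hxmem
  refine ⟨part1, ?_⟩
  rintro hΓ ⟨𝒰, hcnt, hopen, hInt⟩
  have h0mem : ∀ U ∈ 𝒰, (0 : WeakSpace ℝ (lp (fun _ : Γ => ℝ) p)) ∈ U := by
    intro U hU
    have h0 : (0 : WeakSpace ℝ (lp (fun _ : Γ => ℝ) p)) ∈ ⋂₀ 𝒰 := by
      rw [hInt]; rfl
    exact h0 U hU
  have hle := part1 𝒰 (fun U hU => (hopen U hU).mem_nhds (h0mem U hU)) hInt
  have : Cardinal.mk Γ ≤ Cardinal.aleph0 :=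
    hle.trans (Cardinal.le_aleph0_iff_set_countable.mpr hcnt)
  exact hΓ (Cardinal.mk_le_aleph0_iff.mp this)
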